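/- arXiv:2511.15176 — 2 statements merged into one kernel-verified Lean document; each statement's English description precedes it below -/
import Mathlib

section
/- Let π*(u,v) be the unique root of g(π,u,v) = -δγν(e^{-δ(πγ-v)}-1) + δ²(σ²+(σ⁰)²)π - δ²σ⁰u - δμ with γ < 0, ν > 0, δ > 0, σ > 0. Then for fixed u, the map v ↦ π*(u,v) is strictly decreasing, and for fixed v, the map u ↦ π*(u,v) is strictly increasing when σ⁰ > 0. -/
open Real

theorem stmt13 (δ σ σ0 γ μ ν : ℝ)
    (hδ : 0 < δ) (hσ : 0 < σ) (hσ0 : 0 < σ0) (hγ : γ < 0) (hν : 0 < ν)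
    (g : ℝ → ℝ → ℝ → ℝ)
    (hg : ∀ p u v : ℝ, g p u v = -δ * γ * ν * (Real.exp (-δ * (p * γ - v)) - 1)
        + δ ^ 2 * (σ ^ 2 + σ0 ^ 2) * p - δ ^ 2 * σ0 * u - δ * μ)
    (pstar : ℝ → ℝ → ℝ)
    (hroot : ∀ u v : ℝ, g (pstar u v) u v = 0) :
    (∀ u : ℝ, StrictAnti (fun v => pstar u v)) ∧
      (∀ v : ℝ, StrictMono (fun u => pstar u v)) := by
  have hγν : 0 < -δ * γ * ν := by
    have h' : 0 < δ * -γ * ν := mul_pos (mul_pos hδ (by linarith)) hν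
    nlinarith [h']
  have hS : 0 < δ ^ 2 * (σ ^ 2 + σ0 ^ 2) := by positivity
  constructor
  · intro u v1 v2 hv
    simp only []
    by_contra h
    push_neg at h
    have h1 := hroot u v1; rw [hg] at h1
    have h2 := hroot u v2; rw [hg] at h2
    have hE : Real.exp (-δ * (pstar u v1 * γ - v1)) < Real.exp (-δ * (pstar u v2 * γ - v2)) := by
      apply Real.exp_lt_exp.mpr
      have hpγ : pstar u v2 * γ ≤ pstar u v1 * γ := by nlinarith
      nlinarith
    nlinarith [mul_pos hγν (sub_pos.mpr hE),
      mul_nonneg (le_of_lt hS) (sub_nonneg.mpr h)]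
  · intro v u1 u2 hu
    simp only []
    by_contra h
    push_neg at h
    have h1 := hroot u1 v; rw [hg] at h1
    have h2 := hroot u2 v; rw [hg] at h2
    have hE : Real.exp (-δ * (pstar u2 v * γ - v)) ≤ Real.exp (-δ * (pstar u1 v * γ - v)) := by
      apply Real.exp_le_exp.mpr
      have hpγ : pstar u1 v * γ ≤ pstar u2 v * γ := by nlinarith
      nlinarith
    nlinarith [mul_nonneg (le_of_lt hγν) (sub_nonneg.mpr hE),
      mul_nonneg (le_of_lt hS) (sub_nonneg.mpr h),
      mul_pos (mul_pos (mul_pos hδ hδ) hσ0) (sub_pos.mpr hu)]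
end

section
/- Let π*(u,v) be the unique root of g(π,u,v)=0 as above with γ ≠ 0, ν ≥ 0. Then for all (u,v) and (u',v'), |π*(u,v) - π*(u',v')| ≤ (|σ⁰|/(σ²+(σ⁰)²))·|u-u'| + (1/|γ|)·|v-v'|. -/
open Real

set_option maxHeartbeats 1000000 in
theorem stmt14 (δ σ σ0 γ μ ν : ℝ)
    (hδ : 0 < δ) (hσ : 0 < σ) (hγ : γ ≠ 0) (hν : 0 ≤ ν)
    (g : ℝ → ℝ → ℝ → ℝ)
    (hg : ∀ p u v : ℝ, g p u v = -δ * γ * ν * (Real.exp (-δ * (p * γ - v)) - 1)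
        + δ ^ 2 * (σ ^ 2 + σ0 ^ 2) * p - δ ^ 2 * σ0 * u - δ * μ)
    (pstar : ℝ → ℝ → ℝ)
    (hroot : ∀ u v : ℝ, g (pstar u v) u v = 0) :
    ∀ u v u' v' : ℝ,
      |pstar u v - pstar u' v'| ≤
        (|σ0| / (σ ^ 2 + σ0 ^ 2)) * |u - u'| + (1 / |γ|) * |v - v'| := by
  intro u v u' v'
  have h1 := hroot u v
  have h2 := hroot u' v'
  rw [hg] at h1 h2
  obtain ⟨A, hAdef⟩ : ∃ A : ℝ, A = σ ^ 2 + σ0 ^ 2 := ⟨_, rfl⟩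
  rw [← hAdef] at h1 h2
  have hApos : 0 < A := by rw [hAdef]; positivity
  have hγpos : 0 < |γ| := abs_pos.mpr hγ
  obtain ⟨L, hLdef⟩ : ∃ L : ℝ, L = |σ0| / A * |u - u'| + 1 / |γ| * |v - v'| := ⟨_, rfl⟩
  obtain ⟨p, hp⟩ : ∃ p : ℝ, p = pstar u v := ⟨_, rfl⟩
  obtain ⟨p', hp'⟩ : ∃ p' : ℝ, p' = pstar u' v' := ⟨_, rfl⟩
  rw [← hp] at h1
  rw [← hp'] at h2
  obtain ⟨X, hX⟩ : ∃ X : ℝ, X = -δ * (p * γ - v) := ⟨_, rfl⟩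
  obtain ⟨Y, hY⟩ : ∃ Y : ℝ, Y = -δ * (p' * γ - v') := ⟨_, rfl⟩
  rw [← hX] at h1
  rw [← hY] at h2
  -- key sign lemma
  have key : ∀ a b : ℝ, γ * (a - b) ≤ 0 → ν * (γ * (Real.exp a - Real.exp b)) ≤ 0 := by
    intro a b hab
    rcases lt_or_gt_of_ne hγ with h | h
    · have hba : b ≤ a := by nlinarith
      have he := Real.exp_le_exp.mpr hba
      nlinarith [mul_nonneg hν (mul_nonneg (neg_nonneg.mpr h.le)
        (by linarith : (0:ℝ) ≤ Real.exp a - Real.exp b))]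
    · have hba : a ≤ b := by nlinarith
      have he := Real.exp_le_exp.mpr hba
      nlinarith [mul_nonneg hν (mul_nonneg h.le
        (by linarith : (0:ℝ) ≤ Real.exp b - Real.exp a))]
  have hσ0b : σ0 * (u - u') ≤ |σ0| * |u - u'| := by
    calc σ0 * (u - u') ≤ |σ0 * (u - u')| := le_abs_self _
    _ = |σ0| * |u - u'| := abs_mul _ _
  have hσ0b' : -(σ0 * (u - u')) ≤ |σ0| * |u - u'| := by
    calc -(σ0 * (u - u')) ≤ |σ0 * (u - u')| := neg_le_abs _
    _ = |σ0| * |u - u'| := abs_mul _ _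
  have hvb : γ * (v - v') ≤ |γ| * |v - v'| := by
    calc γ * (v - v') ≤ |γ * (v - v')| := le_abs_self _
    _ = |γ| * |v - v'| := abs_mul _ _
  have hvb' : -(γ * (v - v')) ≤ |γ| * |v - v'| := by
    calc -(γ * (v - v')) ≤ |γ * (v - v')| := neg_le_abs _
    _ = |γ| * |v - v'| := abs_mul _ _
  have hu0 : (0:ℝ) ≤ |σ0| / A * |u - u'| := by positivity
  have hγinv : γ ^ 2 * (1 / |γ|) = |γ| := by
    rw [← sq_abs γ]
    field_simp
  have hAL : A * L = |σ0| * |u - u'| + A / |γ| * |v - v'| := by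
    rw [hLdef]
    field_simp
  have hγL : γ ^ 2 * L = γ ^ 2 * (|σ0| / A * |u - u'|) + |γ| * |v - v'| := by
    rw [hLdef, show γ ^ 2 * (|σ0| / A * |u - u'| + 1 / |γ| * |v - v'|)
      = γ ^ 2 * (|σ0| / A * |u - u'|) + (γ ^ 2 * (1 / |γ|)) * |v - v'| from by ring, hγinv]
  have hγLge : |γ| * |v - v'| ≤ γ ^ 2 * L := by
    linarith [mul_nonneg (sq_nonneg γ) hu0]
  have hALb : σ0 * (u - u') ≤ A * L := by
    rw [hAL]
    have : 0 ≤ A / |γ| * |v - v'| := by positivity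
    linarith
  have hALb' : -(σ0 * (u - u')) ≤ A * L := by
    rw [hAL]
    have : 0 ≤ A / |γ| * |v - v'| := by positivity
    linarith
  have hupper : p ≤ p' + L := by
    by_contra hcon
    push_neg at hcon
    have hXY : γ * (X - Y) ≤ 0 := by
      rw [show γ * (X - Y) = -δ * (γ ^ 2 * (p - p') - γ * (v - v')) from by rw [hX, hY]; ring]
      have h1' : γ ^ 2 * L ≤ γ ^ 2 * (p - p') := by
        linarith [mul_nonneg (sq_nonneg γ) (by linarith : (0:ℝ) ≤ p - p' - L)]
      have h2' : 0 ≤ γ ^ 2 * (p - p') - γ * (v - v') := by linarith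
      linarith [mul_nonneg hδ.le h2']
    have hk := key X Y hXY
    have hAp : δ ^ 2 * A * L < δ ^ 2 * A * (p - p') := by
      have h0 : 0 < δ ^ 2 * A := by positivity
      linarith [mul_pos h0 (by linarith : (0:ℝ) < p - p' - L)]
    linarith [mul_nonneg (sq_nonneg δ) (by linarith : (0:ℝ) ≤ A * L - σ0 * (u - u')),
      mul_nonneg hδ.le (neg_nonneg.mpr hk)]
  have hlower : p' - L ≤ p := by
    by_contra hcon
    push_neg at hcon
    have hXY : γ * (Y - X) ≤ 0 := by
      rw [show γ * (Y - X) = -δ * (γ ^ 2 * (p' - p) + γ * (v - v')) from by rw [hX, hY]; ring]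
      have h1' : γ ^ 2 * L ≤ γ ^ 2 * (p' - p) := by
        linarith [mul_nonneg (sq_nonneg γ) (by linarith : (0:ℝ) ≤ p' - p - L)]
      have h2' : 0 ≤ γ ^ 2 * (p' - p) + γ * (v - v') := by linarith
      linarith [mul_nonneg hδ.le h2']
    have hk := key Y X hXY
    have hAp : δ ^ 2 * A * L < δ ^ 2 * A * (p' - p) := by
      have h0 : 0 < δ ^ 2 * A := by positivity
      linarith [mul_pos h0 (by linarith : (0:ℝ) < p' - p - L)]
    linarith [mul_nonneg (sq_nonneg δ) (by linarith : (0:ℝ) ≤ A * L + σ0 * (u - u')),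
      mul_nonneg hδ.le (neg_nonneg.mpr hk)]
  have habs : |p - p'| ≤ L := abs_le.mpr ⟨by linarith, by linarith⟩
  rw [hp, hp'] at habs
  rw [hLdef, hAdef] at habs
  exact habs
end
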